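/- Let ω(V) = (r + m/r²)² where r = r(V) is defined implicitly by V² = r² + k - 2m/r with r > r_m (r_m the largest zero of r² + k - 2m/r). Then dV/dr = √(ω(V))/V, ω'(V) = 2V(1 - 2m/r³), and ω'(V)/V - ω''(V) = -12V² m/(r⁴√(ω(V))). In particular, if m ≤ 0, then ω'(V)/V - ω''(V) ≥ 0. -/

import Mathlib

open Real

/-- Derivatives of the reference function `ω(V) = (r + m/r²)²`, with `r = r(V)` defined
implicitly by `V² = r² + k - 2m/r`:  `dr/dV = V/√(ω(V))` (i.e. `dV/dr = √ω/V`),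
`ω'(V) = 2V(1 - 2m/r³)`, and `ω'(V)/V - ω''(V) = -12V²m/(r⁴√(ω(V)))`.
In particular if `m ≤ 0` then `ω'(V)/V - ω''(V) ≥ 0`. -/
theorem omega_derivative_identities (m k a : ℝ) (ha : 0 ≤ a) (r : ℝ → ℝ)
    (hrpos : ∀ v ∈ Set.Ioi a, 0 < r v)
    (hsmooth : ∀ v ∈ Set.Ioi a, ContDiffAt ℝ 2 r v)
    (hinv : ∀ v ∈ Set.Ioi a, v ^ 2 = (r v) ^ 2 + k - 2 * m / r v)
    (hmono : ∀ v ∈ Set.Ioi a, 0 < r v + m / (r v) ^ 2)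
    (ω : ℝ → ℝ) (hω : ∀ v, ω v = (r v + m / (r v) ^ 2) ^ 2) :
    ∀ v ∈ Set.Ioi a,
      deriv r v = v / Real.sqrt (ω v) ∧
      deriv ω v = 2 * v * (1 - 2 * m / (r v) ^ 3) ∧
      deriv ω v / v - deriv (deriv ω) v =
        -(12 * v ^ 2 * m) / ((r v) ^ 4 * Real.sqrt (ω v)) ∧
      (m ≤ 0 → 0 ≤ deriv ω v / v - deriv (deriv ω) v) := by
  have hsopen : IsOpen (Set.Ioi a) := isOpen_Ioi
  -- sqrt ω = r + m/r²
  have hg : ∀ v ∈ Set.Ioi a, Real.sqrt (ω v) = r v + m / (r v) ^ 2 := by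
    intro v hv
    rw [hω v, Real.sqrt_sq (le_of_lt (hmono v hv))]
  have hr3 : ∀ v ∈ Set.Ioi a, (r v) ^ 3 + m ≠ 0 := by
    intro v hv
    have hr0 : r v ≠ 0 := ne_of_gt (hrpos v hv)
    have h0 : r v + m / (r v) ^ 2 = ((r v) ^ 3 + m) / (r v) ^ 2 := by
      field_simp
    intro h
    have := hmono v hv
    rw [h0, h] at this
    simp at this
  -- derivative of r
  have hrd : ∀ v ∈ Set.Ioi a, HasDerivAt r (v / (r v + m / (r v) ^ 2)) v := by
    intro v hv
    have hr0 : r v ≠ 0 := ne_of_gt (hrpos v hv)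
    have hg0 : r v + m / (r v) ^ 2 ≠ 0 := ne_of_gt (hmono v hv)
    have hdiff : DifferentiableAt ℝ r v := (hsmooth v hv).differentiableAt (by norm_num)
    have hr' : HasDerivAt r (deriv r v) v := hdiff.hasDerivAt
    have h1 : HasDerivAt (fun x => (r x) ^ 2 + k - 2 * m / r x)
        (2 * r v * deriv r v - (0 * r v - 2 * m * deriv r v) / (r v) ^ 2) v := by
      have hsq : HasDerivAt (fun x => (r x) ^ 2) (2 * r v * deriv r v) v := by
        have := hr'.fun_pow 2
        simpa [mul_comm, mul_assoc, mul_left_comm] using this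
      have hdiv : HasDerivAt (fun x => 2 * m / r x)
          ((0 * r v - 2 * m * deriv r v) / (r v) ^ 2) v :=
        (hasDerivAt_const v (2 * m)).div hr' hr0
      simpa using (hsq.add_const k).fun_sub hdiv
    have h2 : HasDerivAt (fun x => (r x) ^ 2 + k - 2 * m / r x) (2 * v) v := by
      have heq : (fun x : ℝ => x ^ 2) =ᶠ[nhds v] (fun x => (r x) ^ 2 + k - 2 * m / r x) := by
        filter_upwards [hsopen.mem_nhds hv] with x hx
        exact hinv x hx
      have hp : HasDerivAt (fun x : ℝ => x ^ 2) (2 * v) v := by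
        simpa using hasDerivAt_pow 2 v
      exact hp.congr_of_eventuallyEq heq.symm
    have huniq := h1.unique h2
    have hval : deriv r v = v / (r v + m / (r v) ^ 2) := by
      rw [eq_div_iff hg0]
      field_simp at huniq ⊢
      nlinarith [huniq]
    rw [← hval]; exact hr'
  -- derivative of ω
  have hωd : ∀ v ∈ Set.Ioi a, HasDerivAt ω (2 * v * (1 - 2 * m / (r v) ^ 3)) v := by
    intro v hv
    have hr0 : r v ≠ 0 := ne_of_gt (hrpos v hv)
    have hg0 : r v + m / (r v) ^ 2 ≠ 0 := ne_of_gt (hmono v hv)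
    have hR3 := hr3 v hv
    have hr' := hrd v hv
    have hgd : HasDerivAt (fun x => r x + m / (r x) ^ 2)
        (v / (r v + m / (r v) ^ 2) +
          (0 * (r v) ^ 2 - m * (2 * r v * (v / (r v + m / (r v) ^ 2)))) / ((r v) ^ 2) ^ 2) v := by
      have hsq : HasDerivAt (fun x => (r x) ^ 2)
          (2 * r v * (v / (r v + m / (r v) ^ 2))) v := by
        have := hr'.fun_pow 2
        simpa [mul_comm, mul_assoc, mul_left_comm] using this
      exact hr'.add ((hasDerivAt_const v m).div hsq (pow_ne_zero 2 hr0))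
    have hωeq : ω = fun x => (r x + m / (r x) ^ 2) ^ 2 := funext hω
    have hωd' : HasDerivAt ω
        (2 * (r v + m / (r v) ^ 2) *
          (v / (r v + m / (r v) ^ 2) +
            (0 * (r v) ^ 2 - m * (2 * r v * (v / (r v + m / (r v) ^ 2)))) / ((r v) ^ 2) ^ 2)) v := by
      rw [hωeq]
      have := hgd.fun_pow 2
      simpa [mul_comm, mul_assoc, mul_left_comm] using this
    convert hωd' using 1
    have hrw : v / (r v + m / (r v) ^ 2) = v * (r v) ^ 2 / ((r v) ^ 3 + m) := by
      rw [div_eq_div_iff hg0 hR3]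
      field_simp
    have h7 : (r v) ^ 4 * m + (r v) ^ 7 ≠ 0 := by
      have he : (r v) ^ 4 * m + (r v) ^ 7 = (r v) ^ 4 * ((r v) ^ 3 + m) := by ring
      rw [he]; exact mul_ne_zero (pow_ne_zero _ hr0) hR3
    have h9 : (r v) ^ 6 * m + (r v) ^ 9 ≠ 0 := by
      have he : (r v) ^ 6 * m + (r v) ^ 9 = (r v) ^ 6 * ((r v) ^ 3 + m) := by ring
      rw [he]; exact mul_ne_zero (pow_ne_zero _ hr0) hR3
    rw [hrw]
    field_simp [hR3]
    ring
  -- first derivative value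
  have hωv : ∀ v ∈ Set.Ioi a, deriv ω v = 2 * v * (1 - 2 * m / (r v) ^ 3) := fun v hv =>
    (hωd v hv).deriv
  intro v hv
  have hva : 0 < v := lt_of_le_of_lt ha hv
  have hr0 : r v ≠ 0 := ne_of_gt (hrpos v hv)
  have hg0 : (0:ℝ) < r v + m / (r v) ^ 2 := hmono v hv
  have hR3 := hr3 v hv
  have hr' := hrd v hv
  -- second derivative
  have hdd : HasDerivAt (deriv ω)
      (2 * (1 - 2 * m / (r v) ^ 3) +
        2 * v * (-(0 * (r v) ^ 3 - 2 * m * (3 * (r v) ^ 2 * (v / (r v + m / (r v) ^ 2)))) / ((r v) ^ 3) ^ 2)) v := by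
    have hcube : HasDerivAt (fun x => (r x) ^ 3)
        (3 * (r v) ^ 2 * (v / (r v + m / (r v) ^ 2))) v := by
      have := hr'.fun_pow 3
      simpa [mul_comm, mul_assoc, mul_left_comm] using this
    have hin : HasDerivAt (fun x => 1 - 2 * m / (r x) ^ 3)
        (-(0 * (r v) ^ 3 - 2 * m * (3 * (r v) ^ 2 * (v / (r v + m / (r v) ^ 2)))) / ((r v) ^ 3) ^ 2) v := by
      have := ((hasDerivAt_const v (2*m)).div hcube (pow_ne_zero 3 hr0)).const_sub 1
      simpa [neg_div] using this
    have h2x : HasDerivAt (fun x : ℝ => 2 * x) 2 v := by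
      simpa using (hasDerivAt_id v).const_mul 2
    have hmain := h2x.mul hin
    have heq : (fun x => 2 * x * (1 - 2 * m / (r x) ^ 3)) =ᶠ[nhds v] deriv ω := by
      filter_upwards [hsopen.mem_nhds hv] with x hx
      exact (hωv x hx).symm
    exact hmain.congr_of_eventuallyEq heq.symm
  have hdd' : deriv (deriv ω) v = 2 * (1 - 2 * m / (r v) ^ 3) +
        2 * v * (-(0 * (r v) ^ 3 - 2 * m * (3 * (r v) ^ 2 * (v / (r v + m / (r v) ^ 2)))) / ((r v) ^ 3) ^ 2) :=
    hdd.deriv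
  have hgs := hg v hv
  have key : deriv ω v / v - deriv (deriv ω) v =
      -(12 * v ^ 2 * m) / ((r v) ^ 4 * Real.sqrt (ω v)) := by
    have hgs2 : Real.sqrt (ω v) = ((r v) ^ 3 + m) / (r v) ^ 2 := by
      rw [hgs]; field_simp
    rw [hωv v hv, hdd', hgs2]
    have hrw : v / (r v + m / (r v) ^ 2) = v * (r v) ^ 2 / ((r v) ^ 3 + m) := by
      rw [div_eq_div_iff (ne_of_gt hg0) hR3]
      field_simp
    have h7 : (r v) ^ 4 * m + (r v) ^ 7 ≠ 0 := by
      have he : (r v) ^ 4 * m + (r v) ^ 7 = (r v) ^ 4 * ((r v) ^ 3 + m) := by ring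
      rw [he]; exact mul_ne_zero (pow_ne_zero _ hr0) hR3
    have h9 : (r v) ^ 6 * m + (r v) ^ 9 ≠ 0 := by
      have he : (r v) ^ 6 * m + (r v) ^ 9 = (r v) ^ 6 * ((r v) ^ 3 + m) := by ring
      rw [he]; exact mul_ne_zero (pow_ne_zero _ hr0) hR3
    rw [hrw]
    field_simp [hR3, h7, h9]
    ring
  refine ⟨by rw [hgs]; exact hr'.deriv, hωv v hv, key, fun hm => ?_⟩
  rw [key]
  apply div_nonneg
  · nlinarith [sq_nonneg v]
  · have : (0:ℝ) < (r v) ^ 4 := pow_pos (hrpos v hv) 4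
    rw [hgs]; positivity
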